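/- Explicit formula for T₋₂(p) (Vasiga–Shallit): let p be an odd prime, let d₁ be the odd part of p − 1 and d₂ the odd part of p + 1. Then the number of periodic points of the map f₋₂(x) = x² − 2 on ZMod p equals (d₁ + d₂)/2. -/

import Mathlib

open Polynomial Function

section AuxLemmas

variable {F : Type*} [Field F] [Fintype F] [DecidableEq F]

private lemma card_nthRootsFinset_of_dvd' {d : ℕ} (hdvd : d ∣ Fintype.card Fˣ) :
    (nthRootsFinset d (1 : F)).card = d := by
  obtain ⟨g, hg⟩ := IsCyclic.exists_ofOrder_eq_natCard (α := Fˣ)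
  rw [Nat.card_eq_fintype_card] at hg
  obtain ⟨k, hk⟩ := hdvd
  have hk0 : 0 < k := by
    rcases Nat.eq_zero_or_pos k with h | h
    · exact absurd (hk.trans (by rw [h, mul_zero])) Fintype.card_ne_zero
    · exact h
  have hord : orderOf (g ^ k) = d := by
    rw [orderOf_pow, hg, hk, Nat.gcd_eq_right (Dvd.intro_left d rfl), Nat.mul_div_cancel _ hk0]
  have hprim : IsPrimitiveRoot ((g ^ k : Fˣ) : F) d := by
    rw [IsPrimitiveRoot.coe_units_iff]
    exact hord ▸ IsPrimitiveRoot.orderOf (g ^ k)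
  exact hprim.card_nthRootsFinset

private lemma exists_algebraMap_eq' {p : ℕ} [Fact p.Prime] [Algebra (ZMod p) F]
    {x : F} (hx : x ^ p = x) : ∃ a : ZMod p, algebraMap (ZMod p) F a = x := by
  classical
  have hppos : 0 < p := (Fact.out : p.Prime).pos
  have hp1 : p ≠ 1 := (Fact.out : p.Prime).one_lt.ne'
  set S : Finset F := Finset.univ.filter (fun z => z ^ p = z) with hS
  set T : Finset F := Finset.univ.image (algebraMap (ZMod p) F) with hT
  have hTS : T ⊆ S := by
    intro z hz
    simp only [hT, Finset.mem_image] at hz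
    obtain ⟨a, _, rfl⟩ := hz
    simp only [hS, Finset.mem_filter, Finset.mem_univ, true_and]
    rw [← map_pow, ZMod.pow_card]
  have hcardT : T.card = p := by
    rw [hT, Finset.card_image_of_injective _ (algebraMap (ZMod p) F).injective,
      Finset.card_univ, ZMod.card]
  have hpoly : (X ^ p - X : F[X]) ≠ 0 := by
    have hc : (X ^ p - X : F[X]).coeff p = 1 := by
      rw [coeff_sub, coeff_X_pow, if_pos rfl, coeff_X, if_neg (by omega), sub_zero]
    intro h
    rw [h, coeff_zero] at hc
    exact one_ne_zero hc.symm
  have hcardS : S.card ≤ p := by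
    have hsub : S ⊆ (X ^ p - X : F[X]).roots.toFinset := by
      intro z hz
      simp only [hS, Finset.mem_filter, Finset.mem_univ, true_and] at hz
      rw [Multiset.mem_toFinset, mem_roots hpoly]
      simp [sub_eq_zero, hz]
    calc S.card ≤ _ := Finset.card_le_card hsub
      _ ≤ Multiset.card (X ^ p - X : F[X]).roots := Multiset.toFinset_card_le _
      _ ≤ (X ^ p - X : F[X]).natDegree := Polynomial.card_roots' _
      _ ≤ p := by
          refine (Polynomial.natDegree_sub_le _ _).trans ?_
          simp only [Polynomial.natDegree_X_pow, Polynomial.natDegree_X, max_le_iff]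
          omega
  have hST : S = T := (Finset.eq_of_subset_of_card_le hTS (hcardS.trans hcardT.ge)).symm
  have hxS : x ∈ S := by simp [hS, hx]
  rw [hST, hT, Finset.mem_image] at hxS
  obtain ⟨a, _, ha⟩ := hxS
  exact ⟨a, ha⟩

omit [Fintype F] [DecidableEq F] in
private lemma iterate_sq_sub_two' (y : F) (hy : y ≠ 0) (n : ℕ) :
    (fun z : F => z ^ 2 - 2)^[n] (y + y⁻¹) = y ^ 2 ^ n + (y ^ 2 ^ n)⁻¹ := by
  induction n with
  | zero => simp
  | succ n ih =>
    rw [Function.iterate_succ_apply', ih]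
    have hyn : y ^ 2 ^ n ≠ 0 := pow_ne_zero _ hy
    have h2 : y ^ 2 ^ (n + 1) = (y ^ 2 ^ n) ^ 2 := by rw [← pow_mul, pow_succ]
    rw [h2]
    have h2' : (y ^ 2 ^ n) ^ 2 ≠ 0 := pow_ne_zero _ hyn
    field_simp
    ring

omit [Fintype F] [DecidableEq F] in
private lemma add_inv_eq_add_inv_iff' {z w : F} (hz : z ≠ 0) (hw : w ≠ 0) :
    z + z⁻¹ = w + w⁻¹ ↔ z = w ∨ z = w⁻¹ := by
  constructor
  · intro h
    have h2 : (z - w) * (z * w - 1) = 0 := by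
      have key : (z - w) * (z * w - 1) = z * w * ((z + z⁻¹) - (w + w⁻¹)) := by
        field_simp
        ring
      rw [key, h, sub_self, mul_zero]
    rcases mul_eq_zero.mp h2 with h3 | h3
    · exact Or.inl (sub_eq_zero.mp h3)
    · exact Or.inr (eq_inv_of_mul_eq_one_left (sub_eq_zero.mp h3))
  · rintro (rfl | rfl)
    · rfl
    · rw [inv_inv, add_comm]

omit [Fintype F] [DecidableEq F] in
private lemma root_quadratic' {y z : F} (hy : y ≠ 0) (h : z ^ 2 - (y + y⁻¹) * z + 1 = 0) :
    z = y ∨ z = y⁻¹ := by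
  have hfac : (z - y) * (z - y⁻¹) = z ^ 2 - (y + y⁻¹) * z + 1 := by
    field_simp
    ring
  have h0 : (z - y) * (z - y⁻¹) = 0 := by rw [hfac, h]
  rcases mul_eq_zero.mp h0 with h3 | h3
  · exact Or.inl (sub_eq_zero.mp h3)
  · exact Or.inr (sub_eq_zero.mp h3)

omit [Fintype F] [DecidableEq F] in
private lemma exists_add_inv' (h2 : (2:F) ≠ 0) {x s : F} (hs : s * s = x ^ 2 - 4) :
    ∃ y : F, y ≠ 0 ∧ x = y + y⁻¹ := by
  have hquad : ((x + s) / 2) ^ 2 - x * ((x + s) / 2) + 1 = 0 := by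
    field_simp
    linear_combination hs
  have hy0 : (x + s) / 2 ≠ 0 := by
    intro h0
    rw [h0] at hquad
    simp at hquad
  refine ⟨(x + s) / 2, hy0, ?_⟩
  have hkey : ((x + s) / 2) * ((x + s) / 2 + ((x + s) / 2)⁻¹) = ((x + s) / 2) * x := by
    have h1 : ((x + s) / 2) * ((x + s) / 2 + ((x + s) / 2)⁻¹) = ((x + s) / 2) ^ 2 + 1 := by
      rw [mul_add, mul_inv_cancel₀ hy0, ← sq]
    rw [h1]
    linear_combination hquad
  exact (mul_left_cancel₀ hy0 hkey).symm

omit [DecidableEq F] in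
private lemma isSquare_algebraMap_of_card' {p : ℕ} [Fact p.Prime] (hp2 : p ≠ 2)
    [Algebra (ZMod p) F] (hcard : Fintype.card F = p ^ 2) (a : ZMod p) :
    IsSquare (algebraMap (ZMod p) F a) := by
  have hp' : p.Prime := Fact.out
  have hpodd : Odd p := hp'.odd_of_ne_two hp2
  by_cases ha : a = 0
  · exact ⟨0, by simp [ha]⟩
  have hF2 : ringChar F ≠ 2 := by
    haveI := charP_of_injective_algebraMap (algebraMap (ZMod p) F).injective p
    rw [ringChar.eq F p]
    exact hp2
  have hane : algebraMap (ZMod p) F a ≠ 0 := fun h =>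
    ha ((algebraMap (ZMod p) F).injective (by simp [h]))
  rw [FiniteField.isSquare_iff hF2 hane, hcard]
  obtain ⟨k, hk⟩ := hpodd
  have hd2 : p ^ 2 / 2 = (p - 1) / 2 * (p + 1) := by
    have e1 : p ^ 2 = 2 * (2 * (k * k) + 2 * k) + 1 := by rw [hk]; ring
    have e2 : (p - 1) / 2 * (p + 1) = 2 * (k * k) + 2 * k := by
      have h4 : (p - 1) / 2 = k := by omega
      rw [h4, hk]; ring
    rw [e1, e2, Nat.mul_add_div two_pos]
    norm_num
  rw [hd2, pow_mul]
  have hhalf : (algebraMap (ZMod p) F a) ^ ((p - 1) / 2) = 1 ∨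
      (algebraMap (ZMod p) F a) ^ ((p - 1) / 2) = -1 := by
    have hsq : ((algebraMap (ZMod p) F a) ^ ((p - 1) / 2)) *
        ((algebraMap (ZMod p) F a) ^ ((p - 1) / 2)) = 1 := by
      rw [← pow_add]
      have he : (p - 1) / 2 + (p - 1) / 2 = p - 1 := by omega
      rw [he, ← map_pow, ZMod.pow_card_sub_one_eq_one ha, map_one]
    exact mul_self_eq_one_iff.mp hsq
  have hev : Even (p + 1) := ⟨k + 1, by omega⟩
  rcases hhalf with h | h
  · rw [h, one_pow]
  · rw [h]
    exact hev.neg_one_pow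

end AuxLemmas

theorem card_periodicPts_sq_sub_two (p : ℕ) [Fact p.Prime] (hp : p ≠ 2)
    (e₁ d₁ e₂ d₂ : ℕ) (hd₁ : Odd d₁) (hd₂ : Odd d₂)
    (h₁ : p - 1 = 2 ^ e₁ * d₁) (h₂ : p + 1 = 2 ^ e₂ * d₂) :
    (Function.periodicPts (fun x : ZMod p => x ^ 2 - 2)).ncard = (d₁ + d₂) / 2 := by
  classical
  have hp' : p.Prime := Fact.out
  have hp3 : 3 ≤ p := by
    have := hp'.two_le
    omega
  have hpodd : Odd p := hp'.odd_of_ne_two hp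
  set f : ZMod p → ZMod p := fun x => x ^ 2 - 2 with hf
  set F := GaloisField p 2 with hF
  letI : Fintype F := Fintype.ofFinite F
  letI : DecidableEq F := Classical.decEq F
  have hcardF : Fintype.card F = p ^ 2 := by
    rw [← Nat.card_eq_fintype_card]
    exact GaloisField.card p 2 two_ne_zero
  have hcardU : Fintype.card Fˣ = p ^ 2 - 1 := by rw [Fintype.card_units, hcardF]
  set ι := algebraMap (ZMod p) F with hι'
  have hι : Function.Injective ι := ι.injective
  have h2F : (2 : F) ≠ 0 := by
    intro h
    have h2 : ((2 : ℕ) : F) = 0 := by exact_mod_cast h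
    rw [CharP.cast_eq_zero_iff F p 2] at h2
    exact hp ((Nat.prime_dvd_prime_iff_eq hp' Nat.prime_two).mp h2)
  have hd₁pos : 0 < d₁ := hd₁.pos
  have hd₂pos : 0 < d₂ := hd₂.pos
  have hd₁p : d₁ ∣ p - 1 := ⟨2 ^ e₁, by rw [h₁, mul_comm]⟩
  have hd₂p : d₂ ∣ p + 1 := ⟨2 ^ e₂, by rw [h₂, mul_comm]⟩
  have hfac : p ^ 2 - 1 = (p + 1) * (p - 1) := by
    have := Nat.sq_sub_sq p 1
    simpa using this
  have hd₁U : d₁ ∣ Fintype.card Fˣ := by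
    rw [hcardU, hfac]
    exact hd₁p.trans (Dvd.intro_left _ rfl)
  have hd₂U : d₂ ∣ Fintype.card Fˣ := by
    rw [hcardU, hfac]
    exact hd₂p.trans (Dvd.intro _ rfl)
  set A : Finset F := nthRootsFinset d₁ (1 : F) ∪ nthRootsFinset d₂ (1 : F) with hA
  have hmemA : ∀ z : F, z ∈ A ↔ z ^ d₁ = 1 ∨ z ^ d₂ = 1 := by
    intro z
    rw [hA, Finset.mem_union, mem_nthRootsFinset hd₁pos, mem_nthRootsFinset hd₂pos]
  have hA0 : ∀ z ∈ A, z ≠ 0 := by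
    intro z hz h0
    rcases (hmemA z).mp hz with h | h <;>
      · rw [h0, zero_pow (by omega)] at h
        exact one_ne_zero h.symm
  have hAinv : ∀ z ∈ A, z⁻¹ ∈ A := by
    intro z hz
    rcases (hmemA z).mp hz with h | h
    · exact (hmemA _).mpr (Or.inl (by rw [inv_pow, h, inv_one]))
    · exact (hmemA _).mpr (Or.inr (by rw [inv_pow, h, inv_one]))
  have h1A : (1 : F) ∈ A := (hmemA 1).mpr (Or.inl (one_pow _))
  have hneg1 : (-1 : F) ≠ 1 := by
    intro h
    apply h2F
    linear_combination -h
  have hneg1A : (-1 : F) ∉ A := by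
    intro h
    rcases (hmemA _).mp h with h' | h'
    · rw [hd₁.neg_one_pow] at h'
      exact hneg1 h'
    · rw [hd₂.neg_one_pow] at h'
      exact hneg1 h'
  have hAodd : ∀ (z : F) (hz0 : z ≠ 0), z ∈ A → Odd (orderOf (Units.mk0 z hz0)) := by
    intro z hz0 hz
    have hdvd : orderOf (Units.mk0 z hz0) ∣ d₁ ∨ orderOf (Units.mk0 z hz0) ∣ d₂ := by
      rcases (hmemA z).mp hz with h | h
      · exact Or.inl (orderOf_dvd_of_pow_eq_one (by ext; simp [h]))
      · exact Or.inr (orderOf_dvd_of_pow_eq_one (by ext; simp [h]))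
    rcases hdvd with h | h
    · obtain ⟨c, hc⟩ := h
      rw [hc] at hd₁
      exact (Nat.odd_mul.mp hd₁).1
    · obtain ⟨c, hc⟩ := h
      rw [hc] at hd₂
      exact (Nat.odd_mul.mp hd₂).1
  have hinter : nthRootsFinset d₁ (1 : F) ∩ nthRootsFinset d₂ (1 : F) = {1} := by
    ext z
    simp only [Finset.mem_inter, mem_nthRootsFinset hd₁pos, mem_nthRootsFinset hd₂pos,
      Finset.mem_singleton]
    constructor
    · rintro ⟨hz1, hz2⟩
      have hz0 : z ≠ 0 := by
        intro h0
        rw [h0, zero_pow (by omega)] at hz1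
        exact one_ne_zero hz1.symm
      have hdvd1 : orderOf (Units.mk0 z hz0) ∣ d₁ :=
        orderOf_dvd_of_pow_eq_one (by ext; simp [hz1])
      have hdvd2 : orderOf (Units.mk0 z hz0) ∣ d₂ :=
        orderOf_dvd_of_pow_eq_one (by ext; simp [hz2])
      have hg : orderOf (Units.mk0 z hz0) ∣ Nat.gcd d₁ d₂ := Nat.dvd_gcd hdvd1 hdvd2
      have hg2 : Nat.gcd d₁ d₂ ∣ 2 := by
        have hga : Nat.gcd d₁ d₂ ∣ p - 1 := (Nat.gcd_dvd_left _ _).trans hd₁p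
        have hgb : Nat.gcd d₁ d₂ ∣ p + 1 := (Nat.gcd_dvd_right _ _).trans hd₂p
        have := Nat.dvd_sub hgb hga
        rwa [show p + 1 - (p - 1) = 2 by omega] at this
      have hgodd : Odd (Nat.gcd d₁ d₂) := by
        obtain ⟨c, hc⟩ := Nat.gcd_dvd_left d₁ d₂
        rw [hc] at hd₁
        exact (Nat.odd_mul.mp hd₁).1
      have hg1 : Nat.gcd d₁ d₂ = 1 := by
        rcases (Nat.dvd_prime Nat.prime_two).mp hg2 with h | h
        · exact h
        · rw [h] at hgodd
          exact absurd hgodd (by decide)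
      rw [hg1, Nat.dvd_one, orderOf_eq_one_iff] at hg
      have : ((Units.mk0 z hz0 : Fˣ) : F) = ((1 : Fˣ) : F) := by rw [hg]
      simpa using this
    · rintro rfl
      exact ⟨one_pow _, one_pow _⟩
  have hAcard : A.card + 1 = d₁ + d₂ := by
    have hcu := Finset.card_union_add_card_inter (nthRootsFinset d₁ (1 : F)) (nthRootsFinset d₂ (1 : F))
    rw [hinter, Finset.card_singleton, card_nthRootsFinset_of_dvd' hd₁U,
      card_nthRootsFinset_of_dvd' hd₂U] at hcu
    rw [hA]
    omega
  have hsemi : ∀ (x : ZMod p) (n : ℕ), ι (f^[n] x) = (fun z : F => z ^ 2 - 2)^[n] (ι x) := by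
    have hc : Function.Semiconj ι f (fun z : F => z ^ 2 - 2) := by
      intro x
      simp only [hf, map_sub, map_pow, map_ofNat]
    intro x n
    exact (hc.iterate_right n) x
  -- the image identification
  have himg : ι '' (Function.periodicPts f) = ↑(A.image (fun z : F => z + z⁻¹)) := by
    ext w
    simp only [Set.mem_image, Finset.coe_image, Finset.mem_coe]
    constructor
    · rintro ⟨x, hx, rfl⟩
      rw [Function.mem_periodicPts] at hx
      obtain ⟨n, hn, hxn⟩ := hx
      obtain ⟨s, hs⟩ := isSquare_algebraMap_of_card' hp hcardF (x ^ 2 - 4)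
      have hs2 : s * s = (ι x) ^ 2 - 4 := by
        rw [← hs, map_sub, map_pow, map_ofNat]
      obtain ⟨y, hy0, hxy⟩ := exists_add_inv' h2F hs2
      -- y^p is a root of the quadratic
      have hroot0 : y ^ 2 - (ι x) * y + 1 = 0 := by
        rw [hxy]
        have hmul : (y + y⁻¹) * y = y ^ 2 + 1 := by
          rw [add_mul, inv_mul_cancel₀ hy0, sq]
        rw [hmul]
        ring
      have hrootp : (y ^ p) ^ 2 - (ι x) * (y ^ p) + 1 = 0 := by
        have hfrob := congrArg (frobenius F p) hroot0
        rw [map_zero, map_add, map_sub, map_mul, map_one] at hfrob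
        have e1 : frobenius F p (y ^ 2) = (y ^ p) ^ 2 := by
          rw [frobenius_def, ← pow_mul, ← pow_mul, mul_comm]
        have e2 : frobenius F p (ι x) = ι x := by
          rw [frobenius_def, ← map_pow, ZMod.pow_card]
        have e3 : frobenius F p y = y ^ p := frobenius_def ..
        rw [e1, e2, e3] at hfrob
        exact hfrob
      have hyp : y ^ p = y ∨ y ^ p = y⁻¹ :=
        root_quadratic' hy0 (by rw [← hxy]; exact hrootp)
      -- order facts
      have hdvdpm : orderOf (Units.mk0 y hy0) ∣ p - 1 ∨ orderOf (Units.mk0 y hy0) ∣ p + 1 := by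
        rcases hyp with h | h
        · left
          have hu : (Units.mk0 y hy0) ^ p = (Units.mk0 y hy0) ^ 1 := by
            ext; simp [h]
          have hmod : p ≡ 1 [MOD orderOf (Units.mk0 y hy0)] := pow_eq_pow_iff_modEq.mp hu
          exact (Nat.modEq_iff_dvd' (by omega)).mp hmod.symm
        · right
          have hu : (Units.mk0 y hy0) ^ (p + 1) = 1 := by
            ext
            simp only [Units.val_mul, Units.val_pow_eq_pow_val, Units.val_mk0, Units.val_one,
              pow_succ, h]
            exact inv_mul_cancel₀ hy0
          exact orderOf_dvd_of_pow_eq_one hu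
      -- periodicity gives odd order
      have hiter : (fun z : F => z ^ 2 - 2)^[n] (ι x) = ι x := by
        rw [← hsemi, hxn]
      rw [hxy, iterate_sq_sub_two' y hy0 n] at hiter
      have hy2n : y ^ 2 ^ n = y ∨ y ^ 2 ^ n = y⁻¹ :=
        (add_inv_eq_add_inv_iff' (pow_ne_zero _ hy0) hy0).mp hiter
      have hoddord : Odd (orderOf (Units.mk0 y hy0)) := by
        have h2n1 : 1 < 2 ^ n := Nat.one_lt_two_pow hn.ne'
        have h2n2 : 2 ∣ 2 ^ n := dvd_pow_self 2 hn.ne'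
        rcases hy2n with h | h
        · have hu : (Units.mk0 y hy0) ^ 2 ^ n = (Units.mk0 y hy0) ^ 1 := by
            ext; simp [h]
          have hmod : 2 ^ n ≡ 1 [MOD orderOf (Units.mk0 y hy0)] := pow_eq_pow_iff_modEq.mp hu
          have hdvd : orderOf (Units.mk0 y hy0) ∣ 2 ^ n - 1 :=
            (Nat.modEq_iff_dvd' (by omega)).mp hmod.symm
          have hodd : Odd (2 ^ n - 1) := Nat.odd_iff.mpr (by omega)
          obtain ⟨c, hc⟩ := hdvd
          rw [hc] at hodd
          exact (Nat.odd_mul.mp hodd).1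
        · have hu : (Units.mk0 y hy0) ^ (2 ^ n + 1) = 1 := by
            ext
            simp only [Units.val_mul, Units.val_pow_eq_pow_val, Units.val_mk0, Units.val_one,
              pow_succ, h]
            exact inv_mul_cancel₀ hy0
          have hdvd : orderOf (Units.mk0 y hy0) ∣ 2 ^ n + 1 := orderOf_dvd_of_pow_eq_one hu
          have hodd : Odd (2 ^ n + 1) := Nat.odd_iff.mpr (by omega)
          obtain ⟨c, hc⟩ := hdvd
          rw [hc] at hodd
          exact (Nat.odd_mul.mp hodd).1
      -- conclude y ∈ A
      have hyA : y ∈ A := by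
        rw [hmemA]
        have hcop : (orderOf (Units.mk0 y hy0)).Coprime 2 := hoddord.coprime_two_right
        rcases hdvdpm with h | h
        · left
          rw [h₁] at h
          have hdvd : orderOf (Units.mk0 y hy0) ∣ d₁ :=
            ((hcop.pow_right e₁).dvd_of_dvd_mul_left h)
          have hu : (Units.mk0 y hy0) ^ d₁ = 1 := orderOf_dvd_iff_pow_eq_one.mp hdvd
          have := congrArg (Units.val) hu
          simpa using this
        · right
          rw [h₂] at h
          have hdvd : orderOf (Units.mk0 y hy0) ∣ d₂ :=
            ((hcop.pow_right e₂).dvd_of_dvd_mul_left h)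
          have hu : (Units.mk0 y hy0) ^ d₂ = 1 := orderOf_dvd_iff_pow_eq_one.mp hdvd
          have := congrArg (Units.val) hu
          simpa using this
      exact ⟨y, hyA, hxy.symm⟩
    · rintro ⟨z, hzA, rfl⟩
      have hz0 := hA0 z hzA
      have hzp : z ^ p = z ∨ z ^ p = z⁻¹ := by
        rcases (hmemA z).mp hzA with h | h
        · left
          have hz1 : z ^ (p - 1) = 1 := by
            rw [h₁, mul_comm, pow_mul, h, one_pow]
          calc z ^ p = z ^ (p - 1 + 1) := by rw [Nat.sub_add_cancel hp'.one_lt.le]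
            _ = z := by rw [pow_succ, hz1, one_mul]
        · right
          have hz1 : z ^ (p + 1) = 1 := by
            rw [h₂, mul_comm, pow_mul, h, one_pow]
          have hm : z ^ p * z = 1 := by rw [← pow_succ]; exact hz1
          exact eq_inv_of_mul_eq_one_left hm
      have hfixp : (z + z⁻¹) ^ p = z + z⁻¹ := by
        have hadd : (z + z⁻¹) ^ p = z ^ p + (z ^ p)⁻¹ := by
          rw [add_pow_char z z⁻¹ p, inv_pow]
        rcases hzp with h | h
        · rw [hadd, h]
        · rw [hadd, h, inv_inv, add_comm]
      obtain ⟨x, hx⟩ := exists_algebraMap_eq' hfixp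
      refine ⟨x, ?_, hx⟩
      rw [Function.mem_periodicPts]
      have hmodd := hAodd z hz0 hzA
      set m := orderOf (Units.mk0 z hz0) with hm
      refine ⟨m.totient, Nat.totient_pos.mpr (orderOf_pos _), ?_⟩
      have hmod : 2 ^ m.totient ≡ 1 [MOD m] :=
        Nat.ModEq.pow_totient (Nat.coprime_two_left.mpr hmodd)
      have hu : (Units.mk0 z hz0) ^ 2 ^ m.totient = (Units.mk0 z hz0) ^ 1 :=
        pow_eq_pow_iff_modEq.mpr (by simpa using hmod)
      have hz2n : z ^ 2 ^ m.totient = z := by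
        have := congrArg Units.val hu
        simpa using this
      have hiter : ι (f^[m.totient] x) = ι x := by
        rw [hsemi, hx, iterate_sq_sub_two' z hz0, hz2n]
      exact hι hiter
  -- counting
  set B : Finset F := A.image (fun z : F => z + z⁻¹) with hB
  have h2B : (2 : F) ∈ B := by
    refine Finset.mem_image.mpr ⟨1, h1A, ?_⟩
    rw [inv_one]
    norm_num
  have hone : ∀ z ∈ A, z + z⁻¹ = 2 → z = 1 := by
    intro z hz h
    have h12 : z + z⁻¹ = 1 + 1⁻¹ := by rw [inv_one, h]; norm_num
    rcases (add_inv_eq_add_inv_iff' (hA0 z hz) one_ne_zero).mp h12 with h' | h'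
    · exact h'
    · rwa [inv_one] at h'
  have hfib : ∀ w ∈ B, (A.filter (fun z => z + z⁻¹ = w)).card = if w = 2 then 1 else 2 := by
    intro w hw
    obtain ⟨z, hzA, rfl⟩ := Finset.mem_image.mp hw
    have hz0 := hA0 z hzA
    have hfil : A.filter (fun v => v + v⁻¹ = z + z⁻¹) = {z, z⁻¹} := by
      ext v
      simp only [Finset.mem_filter, Finset.mem_insert, Finset.mem_singleton]
      constructor
      · rintro ⟨hvA, hv⟩
        exact (add_inv_eq_add_inv_iff' (hA0 v hvA) hz0).mp hv
      · rintro (rfl | rfl)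
        · exact ⟨hzA, rfl⟩
        · exact ⟨hAinv z hzA, by rw [inv_inv, add_comm]⟩
    rw [hfil]
    by_cases hz1 : z = 1
    · subst hz1
      rw [if_pos (by rw [inv_one]; norm_num)]
      simp
    · have hzinv : z ≠ z⁻¹ := by
        intro h
        have hsq : z * z = 1 := by
          nth_rewrite 2 [h]
          rw [mul_inv_cancel₀ hz0]
        rcases mul_self_eq_one_iff.mp hsq with h' | h'
        · exact hz1 h'
        · rw [h'] at hzA
          exact hneg1A hzA
      rw [if_neg (fun h => hz1 (hone z hzA h)), Finset.card_pair hzinv]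
  have hsum : A.card = ∑ w ∈ B, (A.filter (fun z => z + z⁻¹ = w)).card :=
    Finset.card_eq_sum_card_fiberwise (fun z hz => Finset.mem_image_of_mem _ hz)
  rw [Finset.sum_congr rfl hfib] at hsum
  rw [← Finset.add_sum_erase _ _ h2B] at hsum
  have hrest : ∑ w ∈ B.erase 2, (if w = 2 then 1 else 2) = 2 * (B.card - 1) := by
    rw [Finset.sum_congr rfl (fun w hw => if_neg (Finset.ne_of_mem_erase hw)),
      Finset.sum_const, smul_eq_mul, Finset.card_erase_of_mem h2B, mul_comm]
  rw [hrest, if_pos rfl] at hsum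
  have hBpos : 0 < B.card := Finset.card_pos.mpr ⟨2, h2B⟩
  have hP : (Function.periodicPts f).ncard = B.card := by
    calc (Function.periodicPts f).ncard
        = (ι '' Function.periodicPts f).ncard := (Set.ncard_image_of_injective _ hι).symm
      _ = (↑B : Set F).ncard := by rw [himg]
      _ = B.card := Set.ncard_coe_finset B
  rw [hP]
  omega
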